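/- Let G be a finite connected graph and x a vertex of G. If x belongs to some general position set of G of maximum cardinality (a gp-set), then gp(G) − 1 ≤ gp(G − x). -/

import Mathlib

open SimpleGraph

/-- `S` is a *general position set* of `G`: no three distinct vertices of `S`
lie on a common shortest path (geodesic) of `G`. -/
def IsGPSet {V : Type*} (G : SimpleGraph V) (S : Set V) : Prop :=
  ∀ ⦃u v w : V⦄, u ∈ S → v ∈ S → w ∈ S → u ≠ v → u ≠ w → v ≠ w →
    ∀ p : G.Walk u v, p.IsPath → p.length = G.dist u v → w ∉ p.support

/-- The *general position number* of `G`: the maximum cardinality of a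
general position set. -/
noncomputable def gpNum {V : Type*} [Fintype V] (G : SimpleGraph V) : ℕ :=
  sSup {n : ℕ | ∃ S : Finset V, IsGPSet G ↑S ∧ S.card = n}

/-- The vertex-deleted subgraph `G - x`, induced on `V(G) \\ {x}`. -/
def delVert {V : Type*} (G : SimpleGraph V) (x : V) : SimpleGraph {y : V // y ≠ x} :=
  G.comap Subtype.val

lemma lift_walk {V : Type*} (G : SimpleGraph V) (x : V) :
    ∀ {u v : V} (Q : G.Walk u v) (hu : u ≠ x) (hv : v ≠ x), x ∉ Q.support →
    ∃ Q' : (delVert G x).Walk ⟨u, hu⟩ ⟨v, hv⟩, Q'.length = Q.length := by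
  intro u v Q
  induction Q with
  | nil => intro hu hv _; exact ⟨SimpleGraph.Walk.nil, rfl⟩
  | @cons a b c h q ih =>
    intro hu hv hx
    rw [SimpleGraph.Walk.support_cons] at hx
    simp only [List.mem_cons, not_or] at hx
    have hb : b ≠ x := fun hbx => hx.2 (hbx ▸ q.start_mem_support)
    obtain ⟨Q', hQ'⟩ := ih hb hv hx.2
    exact ⟨SimpleGraph.Walk.cons (by exact h : (delVert G x).Adj ⟨a, hu⟩ ⟨b, hb⟩) Q',
      by exact congrArg (· + 1) hQ'⟩

/-- If a vertex `x` of a finite connected graph `G` lies in some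
gp-set of `G` (a general position set of maximum cardinality), then
`gp(G) - 1 ≤ gp(G - x)`. -/
theorem stmt_3 {V : Type*} [Fintype V] [DecidableEq V] (G : SimpleGraph V)
    (hG : G.Connected) (x : V)
    (hx : ∃ S : Finset V, IsGPSet G ↑S ∧ S.card = gpNum G ∧ x ∈ S) :
    gpNum G - 1 ≤ gpNum (delVert G x) := by
  obtain ⟨S, hS, hcard, hxS⟩ := hx
  set G' := delVert G x with hG'
  set T : Finset {y : V // y ≠ x} := (S.erase x).subtype (· ≠ x) with hT
  have hmemT : ∀ a : {y : V // y ≠ x}, a ∈ T ↔ a.val ∈ S := by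
    intro a
    simp [hT, Finset.mem_subtype, Finset.mem_erase, a.2]
  let f : G' ↪g G := SimpleGraph.Embedding.comap (Function.Embedding.subtype (· ≠ x)) G
  have hfval : ∀ a : {y : V // y ≠ x}, f a = a.val := fun a => rfl
  -- distances agree for vertices of S (other than x)
  have hdist : ∀ (u v : {y : V // y ≠ x}), u.val ∈ S → v.val ∈ S → u ≠ v →
      G'.dist u v = G.dist u.val v.val := by
    intro u v huS hvS huv
    have huv' : u.val ≠ v.val := fun h => huv (Subtype.ext h)
    obtain ⟨Q, hQp, hQl⟩ := hG.exists_path_of_dist u.val v.val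
    have hxQ : x ∉ Q.support :=
      hS huS hvS hxS huv' u.2 v.2 Q hQp hQl
    obtain ⟨Q', hQ'⟩ := lift_walk G x Q u.2 v.2 hxQ
    refine le_antisymm ?_ ?_
    · calc G'.dist u v ≤ Q'.length := SimpleGraph.dist_le Q'
        _ = G.dist u.val v.val := by rw [hQ', hQl]
    · have hreach : G'.Reachable u v := ⟨Q'⟩
      obtain ⟨P, hPl⟩ := hreach.exists_walk_length_eq_dist
      calc G.dist u.val v.val ≤ (P.map f.toHom).length := SimpleGraph.dist_le _
        _ = G'.dist u v := by rw [SimpleGraph.Walk.length_map, hPl]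
  -- T is a GP set of G'
  have hTgp : IsGPSet G' ↑T := by
    intro u v w hu hv hw huv huw hvw p hp hpl
    rw [Finset.mem_coe, hmemT] at hu hv hw
    have huv' : u.val ≠ v.val := fun h => huv (Subtype.ext h)
    have huw' : u.val ≠ w.val := fun h => huw (Subtype.ext h)
    have hvw' : v.val ≠ w.val := fun h => hvw (Subtype.ext h)
    have hpl' : (p.map f.toHom).length = G.dist u.val v.val := by
      rw [SimpleGraph.Walk.length_map, hpl, hdist u v hu hv huv]
    have hnot := hS hu hv hw huv' huw' hvw' (p.map f.toHom)
      (p.map_isPath_of_injective f.injective hp) hpl'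
    intro hwp
    exact hnot (by
      have h2 : f.toHom w ∈ (p.map f.toHom).support := by
        rw [SimpleGraph.Walk.support_map]
        exact List.mem_map.mpr ⟨w, hwp, rfl⟩
      exact h2)
  -- cardinality
  have hcardT : T.card = S.card - 1 := by
    rw [hT, Finset.card_subtype,
      Finset.filter_true_of_mem (fun y hy => (Finset.mem_erase.mp hy).1)]
    exact Finset.card_erase_of_mem hxS
  have hbdd : BddAbove {n : ℕ | ∃ S : Finset {y : V // y ≠ x}, IsGPSet G' ↑S ∧ S.card = n} := by
    refine ⟨Fintype.card {y : V // y ≠ x}, ?_⟩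
    rintro n ⟨S', _, rfl⟩
    exact Finset.card_le_univ S'
  have : T.card ≤ gpNum G' := le_csSup hbdd ⟨T, hTgp, rfl⟩
  omega
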